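/- With Δ and ⟨·,·⟩ as the signature-(e, n−e) Laplacian and Hermitian form on ℂ^n, for any n×n complex matrix A one has Δ²{⟨z,z⟩·⟨Az,z⟩} = 2(n+1)·Tr(A). -/
import Mathlib


open MvPolynomial

/-- Signature coefficients of the Hermitian form of signature `(e, n-e)`. -/
noncomputable def eps (n e : ℕ) (k : Fin n) : ℂ := if (k : ℕ) < e then 1 else -1

/-- The polynomial `⟨z,z⟩ = Σ ε_k z^k z̄^k`. -/
noncomputable def hermPoly (n e : ℕ) : MvPolynomial (Fin n ⊕ Fin n) ℂ :=
  ∑ k : Fin n, C (eps n e k) * X (Sum.inl k) * X (Sum.inr k)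

/-- The polynomial `⟨Az,z⟩ = Σ ε_k (Az)^k z̄^k`. -/
noncomputable def hermPolyA (n e : ℕ) (A : Matrix (Fin n) (Fin n) ℂ) :
    MvPolynomial (Fin n ⊕ Fin n) ℂ :=
  ∑ k : Fin n, C (eps n e k) * (∑ j : Fin n, C (A k j) * X (Sum.inl j)) * X (Sum.inr k)

/-- The signature-`(e, n-e)` Laplacian `Δ = Σ ε_k ∂²/∂z^k ∂z̄^k`. -/
noncomputable def Lap (n e : ℕ) (P : MvPolynomial (Fin n ⊕ Fin n) ℂ) :
    MvPolynomial (Fin n ⊕ Fin n) ℂ :=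
  ∑ k : Fin n, C (eps n e k) * pderiv (Sum.inl k) (pderiv (Sum.inr k) P)

lemma eps_sq (n e : ℕ) (k : Fin n) : eps n e k * eps n e k = 1 := by
  unfold eps; split <;> ring

lemma pd_lin (n : ℕ) (f : Fin n → ℂ) (k : Fin n) :
    pderiv (Sum.inl k) (∑ j : Fin n, (C (f j) * X (Sum.inl j) : MvPolynomial (Fin n ⊕ Fin n) ℂ))
      = C (f k) := by
  rw [map_sum]
  simp [pderiv_mul, Pi.single_apply, Sum.inl.injEq, mul_ite, Finset.sum_ite_eq']

lemma pd_inr_P (n e : ℕ) (k : Fin n) :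
    pderiv (Sum.inr k) (hermPoly n e) = C (eps n e k) * X (Sum.inl k) := by
  unfold hermPoly
  rw [map_sum, Finset.sum_eq_single k]
  · simp [pderiv_mul]
  · intro m _ hmk
    simp [pderiv_mul, Sum.inr.injEq, hmk]
  · simp

lemma pd_inl_P (n e : ℕ) (k : Fin n) :
    pderiv (Sum.inl k) (hermPoly n e) = C (eps n e k) * X (Sum.inr k) := by
  unfold hermPoly
  rw [map_sum, Finset.sum_eq_single k]
  · simp [pderiv_mul]; ring
  · intro m _ hmk
    simp [pderiv_mul, Sum.inl.injEq, hmk]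
  · simp

lemma pd_inr_Q (n e : ℕ) (A : Matrix (Fin n) (Fin n) ℂ) (k : Fin n) :
    pderiv (Sum.inr k) (hermPolyA n e A)
      = C (eps n e k) * ∑ j : Fin n, C (A k j) * X (Sum.inl j) := by
  unfold hermPolyA
  rw [map_sum, Finset.sum_eq_single k]
  · simp [pderiv_mul, map_sum]
  · intro m _ hmk
    simp [pderiv_mul, map_sum, Sum.inr.injEq, hmk, Pi.single_apply]
  · simp

lemma pd_inl_Q (n e : ℕ) (A : Matrix (Fin n) (Fin n) ℂ) (k : Fin n) :
    pderiv (Sum.inl k) (hermPolyA n e A)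
      = ∑ m : Fin n, C (eps n e m * A m k) * X (Sum.inr m) := by
  unfold hermPolyA
  rw [map_sum]
  refine Finset.sum_congr rfl fun m _ => ?_
  rw [pderiv_mul, pderiv_mul, pd_lin]
  simp [C_mul]

lemma Q_eq (n e : ℕ) (A : Matrix (Fin n) (Fin n) ℂ) :
    hermPolyA n e A
      = ∑ m : Fin n, ∑ j : Fin n,
          C (eps n e m * A m j) * (X (Sum.inl j) * X (Sum.inr m)) := by
  unfold hermPolyA
  refine Finset.sum_congr rfl fun m _ => ?_
  rw [Finset.mul_sum, Finset.sum_mul]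
  refine Finset.sum_congr rfl fun j _ => ?_
  rw [C_mul]; ring

lemma lap_Q (n e : ℕ) (A : Matrix (Fin n) (Fin n) ℂ) :
    Lap n e (hermPolyA n e A) = C (Matrix.trace A) := by
  unfold Lap
  have h : ∀ k : Fin n, C (eps n e k) *
      pderiv (Sum.inl k) (pderiv (Sum.inr k) (hermPolyA n e A)) = C (A k k) := by
    intro k
    rw [pd_inr_Q, pderiv_mul, pderiv_C, pd_lin, zero_mul, zero_add, ← mul_assoc,
        ← C_mul, eps_sq, C_1, one_mul]
  rw [Finset.sum_congr rfl fun k _ => h k, ← map_sum]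
  simp [Matrix.trace, Matrix.diag]

lemma lap_P (n e : ℕ) :
    Lap n e (hermPoly n e) = C (n : ℂ) := by
  unfold Lap
  have h : ∀ k : Fin n, C (eps n e k) *
      pderiv (Sum.inl k) (pderiv (Sum.inr k) (hermPoly n e)) = 1 := by
    intro k
    rw [pd_inr_P, pderiv_mul, pderiv_C, pderiv_X_self, zero_mul, zero_add, mul_one,
        ← C_mul, eps_sq, C_1]
  rw [Finset.sum_congr rfl fun k _ => h k]
  simp


/-- `Δ²{⟨z,z⟩⟨Az,z⟩} = 2(n+1) Tr(A)`. -/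
theorem stmt1 (n e : ℕ) (he : e ≤ n) (A : Matrix (Fin n) (Fin n) ℂ) :
    Lap n e (Lap n e (hermPoly n e * hermPolyA n e A)) =
      C (2 * ((n : ℂ) + 1) * Matrix.trace A) := by
  have key : Lap n e (hermPoly n e * hermPolyA n e A)
      = C ((n : ℂ) + 2) * hermPolyA n e A + C (Matrix.trace A) * hermPoly n e := by
    unfold Lap
    have term : ∀ k : Fin n, C (eps n e k) *
        pderiv (Sum.inl k) (pderiv (Sum.inr k) (hermPoly n e * hermPolyA n e A))
      = hermPolyA n e A
        + (∑ m : Fin n, C (eps n e m * A m k) * (X (Sum.inl k) * X (Sum.inr m)))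
        + (∑ j : Fin n, C (eps n e k * A k j) * (X (Sum.inl j) * X (Sum.inr k)))
        + C (A k k) * hermPoly n e := by
      intro k
      have t2 : (∑ m : Fin n, C (eps n e m * A m k) * (X (Sum.inl k) * X (Sum.inr m))
            : MvPolynomial (Fin n ⊕ Fin n) ℂ)
          = X (Sum.inl k) * ∑ m : Fin n, C (eps n e m * A m k) * X (Sum.inr m) := by
        rw [Finset.mul_sum]
        exact Finset.sum_congr rfl fun m _ => by ring
      have t3 : (∑ j : Fin n, C (eps n e k * A k j) * (X (Sum.inl j) * X (Sum.inr k))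
            : MvPolynomial (Fin n ⊕ Fin n) ℂ)
          = C (eps n e k) * (∑ j : Fin n, C (A k j) * X (Sum.inl j)) * X (Sum.inr k) := by
        rw [Finset.mul_sum, Finset.sum_mul]
        exact Finset.sum_congr rfl fun j _ => by rw [C_mul]; ring
      simp only [pderiv_mul, map_add, pderiv_C, pderiv_X_self, pd_inr_P, pd_inr_Q,
        pd_inl_P, pd_inl_Q, pd_lin, zero_mul, zero_add, mul_one]
      rw [t2, t3]
      have h2 : (C (eps n e k) * C (eps n e k) : MvPolynomial (Fin n ⊕ Fin n) ℂ) = 1 := by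
        rw [← C_mul, eps_sq, C_1]
      linear_combination (hermPolyA n e A
        + X (Sum.inl k) * ∑ m : Fin n, C (eps n e m * A m k) * X (Sum.inr m)
        + C (eps n e k) * ((∑ j : Fin n, C (A k j) * X (Sum.inl j)) * X (Sum.inr k))
        + C (A k k) * hermPoly n e) * h2
    rw [Finset.sum_congr rfl fun k _ => term k,
        Finset.sum_add_distrib, Finset.sum_add_distrib, Finset.sum_add_distrib]
    have s1 : (∑ _k : Fin n, hermPolyA n e A) = C (n : ℂ) * hermPolyA n e A := by
      rw [Finset.sum_const, Finset.card_univ, Fintype.card_fin, nsmul_eq_mul]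
      simp
    have s2 : (∑ k : Fin n, ∑ m : Fin n,
        C (eps n e m * A m k) * (X (Sum.inl k) * X (Sum.inr m))
          : MvPolynomial (Fin n ⊕ Fin n) ℂ) = hermPolyA n e A := by
      rw [Finset.sum_comm]; exact (Q_eq n e A).symm
    have s3 : (∑ k : Fin n, ∑ j : Fin n,
        C (eps n e k * A k j) * (X (Sum.inl j) * X (Sum.inr k))
          : MvPolynomial (Fin n ⊕ Fin n) ℂ) = hermPolyA n e A :=
      (Q_eq n e A).symm
    have s4 : (∑ k : Fin n, C (A k k) * hermPoly n e)
        = C (Matrix.trace A) * hermPoly n e := by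
      rw [← Finset.sum_mul, ← map_sum]
      simp [Matrix.trace, Matrix.diag]
    rw [s1, s2, s3, s4, map_add]
    simp only [map_ofNat]
    ring
  rw [key]
  have lap_lin : ∀ (c d : ℂ) (P Q : MvPolynomial (Fin n ⊕ Fin n) ℂ),
      Lap n e (C c * P + C d * Q) = C c * Lap n e P + C d * Lap n e Q := by
    intro c d P Q
    unfold Lap
    rw [Finset.mul_sum, Finset.mul_sum, ← Finset.sum_add_distrib]
    refine Finset.sum_congr rfl fun k _ => ?_
    simp only [map_add, pderiv_mul, pderiv_C, zero_mul, zero_add, mul_add]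
    ring
  rw [lap_lin, lap_Q, lap_P, ← C_mul, ← C_mul, ← C_add]
  congr 1; ring
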